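/- In ℝⁿ with n ≥ 2 (Euclidean metric), the Gromov boundary is a singleton set, while the ideal boundary (the set of equivalence classes of geodesic rays) has cardinality at least that of the continuum. Hence the natural map ν from the ideal boundary to the Gromov boundary is not injective. -/

import Mathlib

open Filter

/-- The Gromov product of `x` and `y` with basepoint `o` in a metric space. -/
noncomputable def gromovProd {α : Type*} [MetricSpace α] (o x y : α) : ℝ :=
  (dist x o + dist y o - dist x y) / 2

/-- `x` is a Gromov sequence with basepoint `o`. -/
def IsGromovSeq {α : Type*} [MetricSpace α] (o : α) (x : ℕ → α) : Prop :=
  Tendsto (fun p : ℕ × ℕ => gromovProd o (x p.1) (x p.2)) atTop atTop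

/-- The relation `E` on Gromov sequences. -/
def GromovRel {α : Type*} [MetricSpace α] (o : α) (x y : ℕ → α) : Prop :=
  Tendsto (fun p : ℕ × ℕ => gromovProd o (x p.1) (y p.2)) atTop atTop

/-- `γ : [0,∞) → α` is a unit-speed geodesic ray. -/
def IsGeodesicRay {α : Type*} [MetricSpace α] (γ : ℝ → α) : Prop :=
  ∀ s t : ℝ, 0 ≤ s → 0 ≤ t → dist (γ s) (γ t) = |s - t|

/-- Two rays are equivalent if they stay at uniformly bounded distance. -/
def RayEquiv {α : Type*} [MetricSpace α] (γ₁ γ₂ : ℝ → α) : Prop :=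
  ∃ C : ℝ, ∀ t : ℝ, 0 ≤ t → dist (γ₁ t) (γ₂ t) ≤ C

section Helpers

variable {E : Type*} [NormedAddCommGroup E] [InnerProductSpace ℝ E]

omit [InnerProductSpace ℝ E] in
lemma gp_formula (a b : E) : gromovProd 0 a b = (‖a‖ + ‖b‖ - ‖a - b‖) / 2 := by
  simp [gromovProd, dist_eq_norm]

lemma gp_ge (a b : E) (h : 0 < ‖a‖ + ‖b‖) :
    (‖a‖ * ‖b‖ + (inner ℝ a b : ℝ)) / (2 * (‖a‖ + ‖b‖)) ≤ gromovProd 0 a b := by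
  rw [gp_formula]
  have hc : ‖a - b‖ ^ 2 = ‖a‖ ^ 2 - 2 * (inner ℝ a b : ℝ) + ‖b‖ ^ 2 := norm_sub_sq_real a b
  have hcs : ‖a - b‖ ≤ ‖a‖ + ‖b‖ := norm_sub_le a b
  have hcn : 0 ≤ ‖a - b‖ := norm_nonneg _
  have hD : 0 ≤ ‖a‖ * ‖b‖ + (inner ℝ a b : ℝ) := by
    have := abs_real_inner_le_norm a b
    have := neg_le_of_abs_le this
    linarith
  rw [div_le_div_iff₀ (by linarith) (by norm_num)]
  nlinarith [sq_nonneg (‖a‖ + ‖b‖ - ‖a - b‖)]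

lemma gp_min (a b : E) (ε : ℝ) (hε : 0 < ε)
    (h : (ε - 1) * (‖a‖ * ‖b‖) ≤ (inner ℝ a b : ℝ))
    (ha : 0 < ‖a‖) (hb : 0 < ‖b‖) :
    ε * min ‖a‖ ‖b‖ / 4 ≤ gromovProd 0 a b := by
  have key := gp_ge a b (by linarith)
  refine le_trans ?_ key
  rw [div_le_div_iff₀ (by norm_num) (by linarith)]
  rcases le_total ‖a‖ ‖b‖ with hab | hab
  · rw [min_eq_left hab]; nlinarith [mul_nonneg (mul_nonneg hε.le ha.le) (sub_nonneg.2 hab)]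
  · rw [min_eq_right hab]; nlinarith [mul_nonneg (mul_nonneg hε.le hb.le) (sub_nonneg.2 hab)]

lemma gromovRel_of (x y : ℕ → E) (ε : ℝ) (hε : 0 < ε)
    (hx : Tendsto (fun m => ‖x m‖) atTop atTop)
    (hy : Tendsto (fun m => ‖y m‖) atTop atTop)
    (hangle : ∀ᶠ p : ℕ × ℕ in atTop,
      (ε - 1) * (‖x p.1‖ * ‖y p.2‖) ≤ (inner ℝ (x p.1) (y p.2) : ℝ)) :
    GromovRel 0 x y := by
  rw [GromovRel, tendsto_atTop]
  intro K
  set M : ℝ := max 1 (4 * (|K| + 1) / ε) with hM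
  have hnorm : ∀ᶠ p : ℕ × ℕ in atTop, M ≤ ‖x p.1‖ ∧ M ≤ ‖y p.2‖ := by
    rw [← prod_atTop_atTop_eq]
    exact Filter.Eventually.prod_mk (hx.eventually_ge_atTop M) (hy.eventually_ge_atTop M)
  filter_upwards [hnorm, hangle] with p hp hang
  have hM1 : (1:ℝ) ≤ M := le_max_left _ _
  have hMK : 4 * (|K| + 1) / ε ≤ M := le_max_right _ _
  have ha : 0 < ‖x p.1‖ := by linarith [hp.1]
  have hb : 0 < ‖y p.2‖ := by linarith [hp.2]
  have hmin : M ≤ min ‖x p.1‖ ‖y p.2‖ := le_min hp.1 hp.2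
  have h1 : ε * M ≤ ε * min ‖x p.1‖ ‖y p.2‖ := mul_le_mul_of_nonneg_left hmin hε.le
  have h2 : ε * (4 * (|K| + 1) / ε) ≤ ε * M := mul_le_mul_of_nonneg_left hMK hε.le
  have h3 : ε * (4 * (|K| + 1) / ε) = 4 * (|K| + 1) := by field_simp
  have h4 : K ≤ ε * min ‖x p.1‖ ‖y p.2‖ / 4 := by
    have := le_abs_self K; linarith
  exact le_trans h4 (gp_min _ _ ε hε hang ha hb)

omit [InnerProductSpace ℝ E] in
lemma gromovRel_symm {x y : ℕ → E} (h : GromovRel 0 x y) : GromovRel 0 y x := by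
  have hswap : Tendsto (Prod.swap : ℕ × ℕ → ℕ × ℕ) atTop atTop := by
    rw [← prod_atTop_atTop_eq]
    exact tendsto_snd.prodMk tendsto_fst
  have := h.comp hswap
  refine this.congr fun p => ?_
  simp [gromovProd, Function.comp, dist_comm]
  ring

omit [InnerProductSpace ℝ E] in
lemma gromovSeq_norm {x : ℕ → E} (hx : IsGromovSeq 0 x) :
    Tendsto (fun m => ‖x m‖) atTop atTop := by
  have hdiag : Tendsto (fun m : ℕ => (m, m)) atTop (atTop : Filter (ℕ × ℕ)) := by
    rw [← prod_atTop_atTop_eq]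
    exact tendsto_id.prodMk tendsto_id
  have := hx.comp hdiag
  refine this.congr fun m => ?_
  simp [gromovProd, Function.comp, dist_eq_norm]

omit [InnerProductSpace ℝ E] in
lemma gromovRel_comp {x : ℕ → E} (hx : IsGromovSeq 0 x)
    {φ : ℕ → ℕ} (hφ : Tendsto φ atTop atTop) :
    GromovRel 0 x (x ∘ φ) := by
  have hmap : Tendsto (Prod.map id φ : ℕ × ℕ → ℕ × ℕ) atTop atTop := by
    rw [← prod_atTop_atTop_eq]
    exact (tendsto_fst).prodMk (hφ.comp tendsto_snd)
  refine (hx.comp hmap).congr fun p => ?_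
  simp [Function.comp, Prod.map]

lemma norm_nat_smul (u : E) (hu : ‖u‖ = 1) (k : ℕ) : ‖(k : ℝ) • u‖ = k := by
  rw [norm_smul, hu, mul_one, Real.norm_natCast]

lemma ray_norm_tendsto (u : E) (hu : ‖u‖ = 1) :
    Tendsto (fun k : ℕ => ‖(k : ℝ) • u‖) atTop atTop := by
  have : ∀ k : ℕ, ‖(k:ℝ) • u‖ = (k : ℝ) := fun k => norm_nat_smul u hu k
  simp only [this]
  exact tendsto_natCast_atTop_atTop

lemma gromovRel_ray (x : ℕ → E) (u : E) (hu : ‖u‖ = 1)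
    (hx : Tendsto (fun m => ‖x m‖) atTop atTop)
    (hpos : ∀ᶠ m in atTop, 0 ≤ (inner ℝ (x m) u : ℝ)) :
    GromovRel 0 x (fun k : ℕ => (k : ℝ) • u) := by
  apply gromovRel_of x _ 1 one_pos hx (ray_norm_tendsto u hu)
  have h1 : ∀ᶠ p : ℕ × ℕ in atTop, 0 ≤ (inner ℝ (x p.1) u : ℝ) := by
    rw [← prod_atTop_atTop_eq]
    exact tendsto_fst.eventually hpos
  filter_upwards [h1] with p hp
  rw [real_inner_smul_right]
  have : (0:ℝ) ≤ (p.2 : ℝ) := Nat.cast_nonneg _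
  nlinarith

lemma gromovRel_ray_ray (u v : E) (hu : ‖u‖ = 1) (hv : ‖v‖ = 1)
    (huv : -1 < (inner ℝ u v : ℝ)) :
    GromovRel 0 (fun k : ℕ => (k : ℝ) • u) (fun k : ℕ => (k : ℝ) • v) := by
  apply gromovRel_of _ _ (1 + (inner ℝ u v : ℝ)) (by linarith)
    (ray_norm_tendsto u hu) (ray_norm_tendsto v hv)
  refine Eventually.of_forall fun p => ?_
  rw [real_inner_smul_left, real_inner_smul_right, norm_nat_smul u hu, norm_nat_smul v hv]
  apply le_of_eq; ring

lemma neg_one_lt_inner_of_ne (u w : E) (hu : ‖u‖ = 1) (hw : ‖w‖ = 1) (hne : w ≠ -u) :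
    -1 < (inner ℝ u w : ℝ) := by
  rcases lt_or_ge (-1) (inner ℝ u w : ℝ) with h | h
  · exact h
  · exfalso
    have hge : -(1:ℝ) ≤ (inner ℝ u w : ℝ) := by
      have := abs_real_inner_le_norm u w
      have := neg_le_of_abs_le this
      rw [hu, hw] at this; linarith
    have heq : (inner ℝ u w : ℝ) = -1 := le_antisymm h hge
    have hsq : ‖u + w‖ ^ 2 = 0 := by
      rw [norm_add_sq_real, hu, hw, heq]; ring
    have hz : u + w = 0 := by
      have hn : ‖u + w‖ = 0 := by nlinarith [norm_nonneg (u + w)]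
      exact norm_eq_zero.1 hn
    exact hne (eq_neg_of_add_eq_zero_right hz)

lemma exists_ray_chain [ProperSpace E] (x : ℕ → E) (e : E) (he : ‖e‖ = 1)
    (hx : IsGromovSeq 0 x) :
    ∃ (u : E) (φ : ℕ → ℕ), ‖u‖ = 1 ∧ GromovRel 0 x (x ∘ φ) ∧
      GromovRel 0 (x ∘ φ) (fun k : ℕ => (k : ℝ) • u) := by
  classical
  have hnorm : Tendsto (fun m => ‖x m‖) atTop atTop := gromovSeq_norm hx
  set d : ℕ → E := fun m => if h : x m = 0 then e else ‖x m‖⁻¹ • x m with hd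
  have hdmem : ∀ m, d m ∈ Metric.sphere (0 : E) 1 := by
    intro m
    rw [mem_sphere_zero_iff_norm]
    by_cases h : x m = 0
    · simp [hd, h, he]
    · have hpos : 0 < ‖x m‖ := norm_pos_iff.2 h
      simp only [hd, dif_neg h, norm_smul, norm_inv, norm_norm]
      field_simp
  obtain ⟨u, humem, φ, hφ, hconv⟩ :=
    (isCompact_sphere (0 : E) 1).tendsto_subseq hdmem
  have hu : ‖u‖ = 1 := mem_sphere_zero_iff_norm.1 humem
  refine ⟨u, φ, hu, gromovRel_comp hx hφ.tendsto_atTop, ?_⟩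
  have hnorm2 : Tendsto (fun m => ‖(x ∘ φ) m‖) atTop atTop :=
    hnorm.comp hφ.tendsto_atTop
  apply gromovRel_ray _ u hu hnorm2
  have hinner : Tendsto (fun m => (inner ℝ (d (φ m)) u : ℝ)) atTop (nhds 1) := by
    have := Tendsto.inner (𝕜 := ℝ) hconv (tendsto_const_nhds (x := u))
    rw [real_inner_self_eq_norm_sq, hu] at this
    simpa using this
  have hev1 : ∀ᶠ m in atTop, 0 < (inner ℝ (d (φ m)) u : ℝ) :=
    hinner.eventually (eventually_gt_nhds (by norm_num))
  have hev2 : ∀ᶠ m in atTop, 1 ≤ ‖x (φ m)‖ := hnorm2.eventually_ge_atTop 1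
  filter_upwards [hev1, hev2] with m h1 h2
  have hne : x (φ m) ≠ 0 := by
    intro h0; rw [h0] at h2; simp at h2; norm_num at h2
  rw [hd] at h1
  simp only [dif_neg hne, real_inner_smul_left] at h1
  have hpos : 0 < ‖x (φ m)‖ := by linarith
  have hinv : 0 < ‖x (φ m)‖⁻¹ := inv_pos.2 hpos
  have hh := mul_pos hpos h1
  rw [← mul_assoc, mul_inv_cancel₀ (ne_of_gt hpos), one_mul] at hh
  exact hh.le

lemma isGeodesicRay_smul (u : E) (hu : ‖u‖ = 1) :
    IsGeodesicRay (fun t : ℝ => t • u) := by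
  intro s t _ _
  rw [dist_eq_norm, ← sub_smul, norm_smul, Real.norm_eq_abs, hu, mul_one]

lemma not_rayEquiv (u v : E) (hne : u ≠ v) :
    ¬ RayEquiv (fun t : ℝ => t • u) (fun t : ℝ => t • v) := by
  rintro ⟨C, hC⟩
  have hd : 0 < ‖u - v‖ := by
    rw [norm_pos_iff]; exact sub_ne_zero.2 hne
  set t : ℝ := max 0 ((C + 1) / ‖u - v‖) with ht
  have ht0 : 0 ≤ t := le_max_left _ _
  have hbound := hC t ht0
  rw [dist_eq_norm, ← smul_sub, norm_smul, Real.norm_eq_abs, abs_of_nonneg ht0] at hbound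
  have htge : (C + 1) / ‖u - v‖ ≤ t := le_max_right _ _
  have : C + 1 ≤ t * ‖u - v‖ := (div_le_iff₀ hd).1 htge
  linarith

lemma pick_of_three {α : Type*} (a b c u v : α) (hab : a ≠ b) (hac : a ≠ c) (hbc : b ≠ c) :
    ∃ w, (w = a ∨ w = b ∨ w = c) ∧ w ≠ u ∧ w ≠ v := by
  by_cases h1 : a = u
  · by_cases h2 : b = v
    · refine ⟨c, Or.inr (Or.inr rfl), ?_, ?_⟩
      · rw [← h1]; exact fun h => hac h.symm
      · rw [← h2]; exact fun h => hbc h.symm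
    · refine ⟨b, Or.inr (Or.inl rfl), ?_, h2⟩
      rw [← h1]; exact fun h => hab h.symm
  · by_cases h3 : a = v
    · by_cases h4 : b = u
      · refine ⟨c, Or.inr (Or.inr rfl), ?_, ?_⟩
        · rw [← h4]; exact fun h => hbc h.symm
        · rw [← h3]; exact fun h => hac h.symm
      · refine ⟨b, Or.inr (Or.inl rfl), h4, ?_⟩
        rw [← h3]; exact fun h => hab h.symm
    · exact ⟨a, Or.inl rfl, h1, h3⟩

end Helpers

theorem stmt_6 (n : ℕ) (hn : 2 ≤ n) :
    (∀ x y : ℕ → EuclideanSpace ℝ (Fin n),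
      IsGromovSeq 0 x → IsGromovSeq 0 y → Relation.TransGen (GromovRel 0) x y) ∧
    Cardinal.continuum ≤
      Cardinal.mk (Quot (fun γ₁ γ₂ : {γ : ℝ → EuclideanSpace ℝ (Fin n) // IsGeodesicRay γ} =>
        RayEquiv γ₁.1 γ₂.1)) ∧
    ∃ γ₁ γ₂ : ℝ → EuclideanSpace ℝ (Fin n),
      IsGeodesicRay γ₁ ∧ IsGeodesicRay γ₂ ∧ ¬RayEquiv γ₁ γ₂ ∧
      Relation.TransGen (GromovRel 0) (fun k : ℕ => γ₁ k) (fun k : ℕ => γ₂ k) := by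
  classical
  set i0 : Fin n := ⟨0, by omega⟩ with hi0def
  set i1 : Fin n := ⟨1, by omega⟩ with hi1def
  have hi01 : i0 ≠ i1 := by
    intro h
    rw [Fin.ext_iff] at h
    simp [hi0def, hi1def] at h
  set a : EuclideanSpace ℝ (Fin n) := EuclideanSpace.single i0 (1:ℝ) with hadef
  set b : EuclideanSpace ℝ (Fin n) := EuclideanSpace.single i1 (1:ℝ) with hbdef
  have hna : ‖a‖ = 1 := by rw [hadef, EuclideanSpace.norm_single]; norm_num
  have hnb : ‖b‖ = 1 := by rw [hbdef, EuclideanSpace.norm_single]; norm_num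
  have hai0 : a i0 = 1 := by simp [hadef, EuclideanSpace.single_apply]
  have hai1 : a i1 = 0 := by simp [hadef, EuclideanSpace.single_apply, Ne.symm hi01]
  have hbi0 : b i0 = 0 := by simp [hbdef, EuclideanSpace.single_apply, hi01]
  have hbi1 : b i1 = 1 := by simp [hbdef, EuclideanSpace.single_apply]
  have hab : a ≠ b := by
    intro h
    have := congrArg (fun v => v i0) h
    rw [hai0, hbi0] at this; norm_num at this
  have hana : a ≠ -a := by
    intro h
    have := congrArg (fun v => v i0) h
    rw [PiLp.neg_apply] at this
    rw [hai0] at this; norm_num at this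
  have hbna : b ≠ -a := by
    intro h
    have := congrArg (fun v => v i1) h
    rw [PiLp.neg_apply] at this
    rw [hbi1, hai1] at this; norm_num at this
  refine ⟨?_, ?_, ?_⟩
  · -- Part 1: Gromov boundary singleton
    intro x y hx hy
    obtain ⟨u, φ, hu, hx1, hx2⟩ := exists_ray_chain x a hna hx
    obtain ⟨v, ψ, hv, hy1, hy2⟩ := exists_ray_chain y a hna hy
    obtain ⟨w, hwmem, hwu, hwv⟩ := pick_of_three a b (-a) (-u) (-v) hab hana hbna
    have hw : ‖w‖ = 1 := by
      rcases hwmem with rfl | rfl | rfl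
      · exact hna
      · exact hnb
      · rw [norm_neg]; exact hna
    have r1 : GromovRel 0 (fun k : ℕ => (k:ℝ) • u) (fun k : ℕ => (k:ℝ) • w) :=
      gromovRel_ray_ray u w hu hw (neg_one_lt_inner_of_ne u w hu hw hwu)
    have r2' := neg_one_lt_inner_of_ne v w hv hw hwv
    have r2 : GromovRel 0 (fun k : ℕ => (k:ℝ) • w) (fun k : ℕ => (k:ℝ) • v) :=
      gromovRel_ray_ray w v hw hv (by rwa [real_inner_comm] at r2')
    exact (((((Relation.TransGen.single hx1).tail hx2).tail r1).tail r2).tail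
      (gromovRel_symm hy2)).tail (gromovRel_symm hy1)
  · -- Part 2: ideal boundary has at least continuum many points
    have hequiv : Equivalence
        (fun γ₁ γ₂ : {γ : ℝ → EuclideanSpace ℝ (Fin n) // IsGeodesicRay γ} =>
          RayEquiv γ₁.1 γ₂.1) := by
      constructor
      · intro γ; exact ⟨0, fun t _ => by simp⟩
      · rintro γ δ ⟨C, hC⟩
        exact ⟨C, fun t ht => by rw [dist_comm]; exact hC t ht⟩
      · rintro γ δ ζ ⟨C, hC⟩ ⟨D, hD⟩
        exact ⟨C + D, fun t ht =>
          le_trans (dist_triangle _ (δ.1 t) _) (add_le_add (hC t ht) (hD t ht))⟩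
    set vf : ℝ → EuclideanSpace ℝ (Fin n) := fun t => a + t • b with hvf
    have hv0 : ∀ t, vf t i0 = 1 := by
      intro t
      rw [hvf]
      simp only [PiLp.add_apply, PiLp.smul_apply, smul_eq_mul]
      rw [hai0, hbi0]; ring
    have hv1 : ∀ t, vf t i1 = t := by
      intro t
      rw [hvf]
      simp only [PiLp.add_apply, PiLp.smul_apply, smul_eq_mul]
      rw [hai1, hbi1]; ring
    have hvne : ∀ t, vf t ≠ 0 := by
      intro t h
      have := congrArg (fun v => v i0) h
      rw [hv0 t] at this
      simp at this
    have hvpos : ∀ t, 0 < ‖vf t‖ := fun t => norm_pos_iff.2 (hvne t)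
    set U : ℝ → EuclideanSpace ℝ (Fin n) := fun t => ‖vf t‖⁻¹ • vf t with hUdef
    have hU : ∀ t, ‖U t‖ = 1 := by
      intro t
      rw [hUdef]
      simp only [norm_smul, norm_inv, norm_norm]
      exact inv_mul_cancel₀ (ne_of_gt (hvpos t))
    have hUinj : ∀ t t', U t = U t' → t = t' := by
      intro t t' h
      have h0 := congrArg (fun v => v i0) h
      have h1 := congrArg (fun v => v i1) h
      rw [hUdef] at h0 h1
      simp only [PiLp.smul_apply, smul_eq_mul] at h0 h1
      rw [hv0 t, hv0 t'] at h0
      rw [hv1 t, hv1 t'] at h1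
      rw [mul_one, mul_one] at h0
      rw [h0] at h1
      have hpos : (0:ℝ) < ‖vf t'‖⁻¹ := inv_pos.2 (hvpos t')
      exact mul_left_cancel₀ (ne_of_gt hpos) h1
    set F : ℝ → Quot (fun γ₁ γ₂ : {γ : ℝ → EuclideanSpace ℝ (Fin n) // IsGeodesicRay γ} =>
        RayEquiv γ₁.1 γ₂.1) :=
      fun t => Quot.mk _ ⟨fun s => s • U t, isGeodesicRay_smul _ (hU t)⟩ with hF
    have hFinj : Function.Injective F := by
      intro t t' h
      rw [hF] at h
      have h2 := Quot.eq.1 h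
      rw [hequiv.eqvGen_iff] at h2
      by_contra htne
      exact not_rayEquiv (U t) (U t') (fun hh => htne (hUinj t t' hh)) h2
    calc Cardinal.continuum = Cardinal.mk ℝ := Cardinal.mk_real.symm
      _ ≤ _ := Cardinal.mk_le_of_injective hFinj
  · -- Part 3: two inequivalent rays with related Gromov sequences
    refine ⟨fun t => t • a, fun t => t • b, isGeodesicRay_smul a hna, isGeodesicRay_smul b hnb,
      not_rayEquiv a b hab, Relation.TransGen.single ?_⟩
    exact gromovRel_ray_ray a b hna hnb (neg_one_lt_inner_of_ne a b hna hnb hbna)
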